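/- Let V be a d×d real symmetric positive definite matrix, u ∈ ℝᵈ, and p ∈ (0, 1]. Then ‖u‖_{V⁻¹}² ≤ ‖u‖₂^{2p/(p+1)} · ‖u‖_{V^{−1−p}}^{2/(p+1)}. -/

import Mathlib

open Matrix

/-- The Mahalanobis norm `‖x‖_B = √(xᵀ B x)`. -/
noncomputable def mnorm {d : ℕ} (B : Matrix (Fin d) (Fin d) ℝ) (x : Fin d → ℝ) : ℝ :=
  Real.sqrt (x ⬝ᵥ B *ᵥ x)

/-- Real matrix power of a symmetric matrix, via the spectral decomposition
(junk value `0` on non-Hermitian matrices). -/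
noncomputable def mpow {d : ℕ} (A : Matrix (Fin d) (Fin d) ℝ) (q : ℝ) :
    Matrix (Fin d) (Fin d) ℝ :=
  if hA : A.IsHermitian then
    (hA.eigenvectorUnitary : Matrix (Fin d) (Fin d) ℝ) *
      Matrix.diagonal (fun i => hA.eigenvalues i ^ q) *
      star (hA.eigenvectorUnitary : Matrix (Fin d) (Fin d) ℝ)
  else 0

/-- Hölder interpolation step in the proof of Lemma 3 of the paper. -/
theorem holder_interpolation {d : ℕ} (V : Matrix (Fin d) (Fin d) ℝ) (hV : V.PosDef)
    (u : Fin d → ℝ) (p : ℝ) (hp0 : 0 < p) (hp1 : p ≤ 1) :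
    mnorm V⁻¹ u ^ 2 ≤
      Real.sqrt (u ⬝ᵥ u) ^ (2 * p / (p + 1)) * mnorm (mpow V (-1 - p)) u ^ (2 / (p + 1)) := by
  have hH : V.IsHermitian := hV.1
  set U : Matrix (Fin d) (Fin d) ℝ := (hH.eigenvectorUnitary : Matrix (Fin d) (Fin d) ℝ) with hU
  have hUstar : star U = Uᵀ := by
    ext i j; simp [Matrix.star_eq_conjTranspose, Matrix.conjTranspose_apply]
  have hUU : U * star U = 1 := (Matrix.mem_unitaryGroup_iff).mp hH.eigenvectorUnitary.2
  set lam : Fin d → ℝ := hH.eigenvalues with hlam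
  have hlampos : ∀ i, 0 < lam i := fun i => hV.eigenvalues_pos i
  set w : Fin d → ℝ := Uᵀ *ᵥ u with hw
  have hp1' : (0:ℝ) < p + 1 := by linarith
  -- quadratic form computation
  have quad : ∀ f : Fin d → ℝ,
      u ⬝ᵥ (U * Matrix.diagonal f * star U) *ᵥ u = ∑ i, f i * w i ^ 2 := by
    intro f
    rw [hUstar, Matrix.mul_assoc, ← Matrix.mulVec_mulVec, ← Matrix.mulVec_mulVec,
      Matrix.dotProduct_mulVec, ← Matrix.mulVec_transpose, ← hw]
    simp only [Matrix.mulVec_diagonal, dotProduct]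
    exact Finset.sum_congr rfl fun i _ => by ring
  -- spectral theorem
  have hspec : V = U * Matrix.diagonal lam * star U := by
    simpa [Function.comp] using hH.spectral_theorem
  -- inverse
  have hinv : V⁻¹ = U * Matrix.diagonal (fun i => (lam i)⁻¹) * star U := by
    apply Matrix.inv_eq_right_inv
    rw [hspec]
    have hmid : star U * (U * Matrix.diagonal (fun i => (lam i)⁻¹) * star U)
        = Matrix.diagonal (fun i => (lam i)⁻¹) * star U := by
      rw [← Matrix.mul_assoc, ← Matrix.mul_assoc,
        (Matrix.mem_unitaryGroup_iff').mp hH.eigenvectorUnitary.2, Matrix.one_mul]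
    rw [Matrix.mul_assoc (U * Matrix.diagonal lam), hmid, ← Matrix.mul_assoc,
      Matrix.mul_assoc U, Matrix.diagonal_mul_diagonal]
    have hd : (fun i => lam i * (lam i)⁻¹) = fun _ : Fin d => (1 : ℝ) := by
      funext i; exact mul_inv_cancel₀ (hlampos i).ne'
    rw [hd, Matrix.diagonal_one, Matrix.mul_one, hUU]
  -- mpow
  have hmp : mpow V (-1 - p) = U * Matrix.diagonal (fun i => lam i ^ (-1 - p)) * star U := by
    rw [mpow, dif_pos hH]
  -- the three sums
  have h0 : u ⬝ᵥ V⁻¹ *ᵥ u = ∑ i, (lam i)⁻¹ * w i ^ 2 := by rw [hinv]; exact quad _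
  have h1 : u ⬝ᵥ u = ∑ i, w i ^ 2 := by
    have h := quad (fun _ : Fin d => (1 : ℝ))
    simpa [Matrix.diagonal_one, hUU] using h
  have h2 : u ⬝ᵥ (mpow V (-1 - p)) *ᵥ u = ∑ i, lam i ^ (-1 - p) * w i ^ 2 := by
    rw [hmp]; exact quad _
  -- nonnegativity
  have hS0 : (0:ℝ) ≤ ∑ i, (lam i)⁻¹ * w i ^ 2 :=
    Finset.sum_nonneg fun i _ => mul_nonneg (inv_nonneg.2 (hlampos i).le) (sq_nonneg _)
  have hS1 : (0:ℝ) ≤ ∑ i, w i ^ 2 := Finset.sum_nonneg fun i _ => sq_nonneg _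
  have hS2 : (0:ℝ) ≤ ∑ i, lam i ^ (-1 - p) * w i ^ 2 :=
    Finset.sum_nonneg fun i _ =>
      mul_nonneg (Real.rpow_nonneg (hlampos i).le _) (sq_nonneg _)
  -- Hölder
  have hpq : Real.HolderConjugate ((p + 1) / p) (p + 1) := by
    rw [Real.holderConjugate_iff]
    constructor
    · rw [lt_div_iff₀ hp0]; linarith
    · field_simp
  have holder := Real.inner_le_Lp_mul_Lq (Finset.univ)
      (fun i => (w i ^ 2) ^ (p / (p + 1)))
      (fun i => (lam i ^ (-1 - p) * w i ^ 2) ^ (1 / (p + 1))) hpq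
  have key : ∀ a b : ℝ, 0 ≤ a → 0 < b →
      a ^ (p/(p+1)) * (b ^ (-1-p) * a) ^ (1/(p+1)) = b⁻¹ * a := by
    intro a b ha hb
    rw [Real.mul_rpow (Real.rpow_nonneg hb.le _) ha, ← Real.rpow_mul hb.le]
    have e1 : (-1-p) * (1/(p+1)) = -1 := by field_simp; ring
    have e2 : p/(p+1) + 1/(p+1) = 1 := by field_simp
    rw [e1, Real.rpow_neg_one]
    calc a ^ (p/(p+1)) * (b⁻¹ * a ^ (1/(p+1)))
        = b⁻¹ * (a ^ (p/(p+1)) * a ^ (1/(p+1))) := by ring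
      _ = b⁻¹ * a := by
          rw [← Real.rpow_add_of_nonneg ha (by positivity) (by positivity), e2, Real.rpow_one]
  have keyf : ∀ a : ℝ, 0 ≤ a → |a ^ (p/(p+1))| ^ ((p+1)/p) = a := by
    intro a ha
    rw [abs_of_nonneg (Real.rpow_nonneg ha _), ← Real.rpow_mul ha]
    have : p/(p+1) * ((p+1)/p) = 1 := by field_simp
    rw [this, Real.rpow_one]
  have keyg : ∀ c : ℝ, 0 ≤ c → |c ^ (1/(p+1))| ^ (p+1) = c := by
    intro c hc
    rw [abs_of_nonneg (Real.rpow_nonneg hc _), ← Real.rpow_mul hc]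
    have : 1/(p+1) * (p+1) = 1 := by field_simp
    rw [this, Real.rpow_one]
  have hmain : ∑ i, (lam i)⁻¹ * w i ^ 2 ≤
      (∑ i, w i ^ 2) ^ (p/(p+1)) * (∑ i, lam i ^ (-1-p) * w i ^ 2) ^ (1/(p+1)) := by
    have e3 : 1 / ((p+1)/p) = p/(p+1) := by field_simp
    calc ∑ i, (lam i)⁻¹ * w i ^ 2
        = ∑ i, (w i ^ 2) ^ (p/(p+1)) * (lam i ^ (-1-p) * w i ^ 2) ^ (1/(p+1)) := by
          exact Finset.sum_congr rfl fun i _ => (key _ _ (sq_nonneg _) (hlampos i)).symm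
      _ ≤ (∑ i, |(w i ^ 2) ^ (p/(p+1))| ^ ((p+1)/p)) ^ (1/((p+1)/p)) *
            (∑ i, |(lam i ^ (-1-p) * w i ^ 2) ^ (1/(p+1))| ^ (p+1)) ^ (1/(p+1)) := holder
      _ = (∑ i, w i ^ 2) ^ (p/(p+1)) * (∑ i, lam i ^ (-1-p) * w i ^ 2) ^ (1/(p+1)) := by
          rw [e3]
          congr 1
          · congr 1
            exact Finset.sum_congr rfl fun i _ => keyf _ (sq_nonneg _)
          · congr 1
            exact Finset.sum_congr rfl fun i _ =>
              keyg _ (mul_nonneg (Real.rpow_nonneg (hlampos i).le _) (sq_nonneg _))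
  -- assemble
  have hL : mnorm V⁻¹ u ^ 2 = ∑ i, (lam i)⁻¹ * w i ^ 2 := by
    rw [mnorm, Real.sq_sqrt (h0 ▸ hS0), h0]
  have hR1 : Real.sqrt (u ⬝ᵥ u) ^ (2 * p / (p + 1)) = (∑ i, w i ^ 2) ^ (p/(p+1)) := by
    rw [h1, Real.sqrt_eq_rpow, ← Real.rpow_mul hS1]
    congr 1
    field_simp
  have hR2 : mnorm (mpow V (-1 - p)) u ^ (2 / (p + 1))
      = (∑ i, lam i ^ (-1-p) * w i ^ 2) ^ (1/(p+1)) := by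
    rw [mnorm, h2, Real.sqrt_eq_rpow, ← Real.rpow_mul hS2]
    congr 1
    field_simp
  rw [hL, hR1, hR2]
  exact hmain
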